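/- Soundness of the Identity axiom for process realizability: for every formula A (with atoms interpreted by arbitrary pairs of positive/negative realizer sets), the wire process I ≝ rec X. Σ_{a ∈ Act₊} (l(a) ∪ r(a)‾).X satisfies I ⊩₊ A^⊥ ⅋ A, i.e. I realizes A ⊸ A: for all Q with Q ⊩₊ A, ⟨Q | I⟩ ⊩₊ A, and for all R with R ⊩₋ A, (I | R⟩ ⊩₋ A. -/

import Mathlib

set_option linter.unnecessarySeqFocus false

/-! # CCS with simultaneous actions (Abramsky, "Process Realizability") -/

/-- Labels: names (`inl`) and co-names (`inr`). -/
abbrev Label : Type := ℕ ⊕ ℕ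

/-- The involution `λ ↦ λ̄` exchanging names and co-names. -/
def Label.bar : Label → Label
  | .inl n => .inr n
  | .inr n => .inl n

/-- Actions: finite sets of labels, performed simultaneously.  `τ = ∅`. -/
abbrev Act : Type := Finset Label

/-- A renaming: a partial injective function on labels preserving the involution. -/
structure Renaming where
  toFun : Label → Option Label
  inj : ∀ ⦃x y z : Label⦄, toFun x = some z → toFun y = some z → x = y
  bar : ∀ x : Label, toFun (Label.bar x) = (toFun x).map Label.bar

/-- The pointwise extension of a renaming to actions. -/
def Renaming.onAction (f : Renaming) (a : Act) : Act :=
  a.filterMap f.toFun (fun _ _ _ hx hy => f.inj (Option.mem_def.mp hx) (Option.mem_def.mp hy))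

/-- Guarded process terms of CCS with simultaneous actions:
prefix, countably-indexed guarded sums (all guards non-`τ`), parallel composition,
restriction, renaming, process variables (de Bruijn) and recursion. -/
inductive Proc : Type where
  | pre (a : Act) (P : Proc)
  | sum (I : Set ℕ) (act : ℕ → Act) (cont : ℕ → Proc) (hg : ∀ n ∈ I, (act n).Nonempty)
  | par (P Q : Proc)
  | restrict (P : Proc) (L : Set Label)
  | rename (P : Proc) (f : Renaming)
  | var (n : ℕ)
  | fix (P : Proc)

/-- The inactive process `0` (the empty sum). -/
def Proc.nil : Proc := .sum ∅ (fun _ => ∅) (fun _ => .var 0) (by simp)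

/-- Substitution of a process for the variable with de Bruijn index `d`. -/
def Proc.subst (R : Proc) : ℕ → Proc → Proc
  | d, .pre a P => .pre a (Proc.subst R d P)
  | d, .sum I act cont hg => .sum I act (fun n => Proc.subst R d (cont n)) hg
  | d, .par P Q => .par (Proc.subst R d P) (Proc.subst R d Q)
  | d, .restrict P L => .restrict (Proc.subst R d P) L
  | d, .rename P f => .rename (Proc.subst R d P) f
  | d, .var n => if n = d then R else .var n
  | d, .fix P => .fix (Proc.subst R (d + 1) P)

/-- The labelled transition relation, with the generalized synchronization rule
for simultaneous (compound) actions. -/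
inductive Step : Proc → Act → Proc → Prop where
  | pre {a P} : Step (.pre a P) a P
  | sum {I act cont hg} (j : ℕ) (hj : j ∈ I) : Step (.sum I act cont hg) (act j) (cont j)
  | restrict {P a Q L} : Step P a Q → (∀ l ∈ a, l ∉ L ∧ Label.bar l ∉ L) →
      Step (.restrict P L) a (.restrict Q L)
  | rename {P a Q} {f : Renaming} : Step P a Q → (∀ l ∈ a, (f.toFun l).isSome) →
      Step (.rename P f) (f.onAction a) (.rename Q f)
  | fix {P a Q} : Step (Proc.subst (.fix P) 0 P) a Q → Step (.fix P) a Q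
  | parL {P a P' Q} : Step P a P' → Step (.par P Q) a (.par P' Q)
  | parR {P Q a Q'} : Step Q a Q' → Step (.par P Q) a (.par P Q')
  | sync {P Q P' Q' a b c} : Step P (a ∪ b) P' → Step Q (b.image Label.bar ∪ c) Q' →
      Disjoint a b → Disjoint (b.image Label.bar) c → Disjoint a c →
      Step (.par P Q) (a ∪ c) (.par P' Q')

/-- Zero or more silent (`τ`) transitions. -/
def TauStar : Proc → Proc → Prop :=
  Relation.ReflTransGen (fun P Q => Step P ∅ Q)

/-- Observable transition `P ⟹a Q`: `τ* a τ*`. -/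
def Obs (P : Proc) (a : Act) (Q : Proc) : Prop :=
  ∃ P₁ P₂, TauStar P P₁ ∧ Step P₁ a P₂ ∧ TauStar P₂ Q

/-- Observable transitions along a string of (non-`τ`) actions. -/
inductive ObsSeq : Proc → List Act → Proc → Prop where
  | nil {P Q} : TauStar P Q → ObsSeq P [] Q
  | cons {P a Q s R} : Obs P a Q → ObsSeq Q s R → ObsSeq P (a :: s) R

/-- The failures of a process: pairs `(s, X)` with `s` a string of nonempty actions and
`X` a set of nonempty actions such that `P ⟹s Q` for some `Q` refusing every action of `X`. -/
def failures (P : Proc) : Set (List Act × Set Act) :=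
  { sX | (∀ a ∈ sX.1, a.Nonempty) ∧ (∀ a ∈ sX.2, a.Nonempty) ∧
      ∃ Q, ObsSeq P sX.1 Q ∧ ∀ a ∈ sX.2, ¬∃ R, Obs Q a R }

/-- Failures equivalence. -/
def FailEq (P Q : Proc) : Prop := failures P = failures Q

/-- Weak simulations (with respect to the observable transitions). -/
def IsWeakSim (R : Proc → Proc → Prop) : Prop :=
  ∀ ⦃P Q⦄, R P Q →
    (∀ P', TauStar P P' → ∃ Q', TauStar Q Q' ∧ R P' Q') ∧
    (∀ a P', (a : Act).Nonempty → Obs P a P' → ∃ Q', Obs Q a Q' ∧ R P' Q')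

/-- Weak bisimilarity. -/
def WeakBisim (P Q : Proc) : Prop :=
  ∃ R : Proc → Proc → Prop, IsWeakSim R ∧ IsWeakSim (fun x y => R y x) ∧ R P Q
/-! ## The split name space and the basic combinators -/

/-- Build a bar-preserving partial injective renaming from a partial injective map on names. -/
def Renaming.ofNameFun (f : ℕ → Option ℕ)
    (hf : ∀ ⦃x y z : ℕ⦄, f x = some z → f y = some z → x = y) : Renaming where
  toFun := fun l =>
    match l with
    | .inl n => (f n).map .inl
    | .inr n => (f n).map .inr
  inj := by
    rintro (x | x) (y | y) (z | z) hx hy <;>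
      simp only [Option.map_eq_some_iff] at hx hy <;>
      obtain ⟨a, ha, ha'⟩ := hx <;> obtain ⟨b, hb, hb'⟩ := hy <;>
        solve
          | (cases ha'; cases hb'; exact congrArg _ (hf ha hb))
          | (cases hb')
          | (cases ha')
  bar := by
    rintro (n | n) <;> cases hf : f n <;> simp [Label.bar, hf]

/-- The underlying name of a label. -/
def Label.name : Label → ℕ := Sum.elim id id

/-- The injection `l` of the name space onto its "left" half (even names). -/
def lRen : Renaming := Renaming.ofNameFun (fun n => some (2 * n)) (by intro x y z hx hy; simp only [Option.some.injEq] at hx hy; omega)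

/-- The injection `r` of the name space onto its "right" half (odd names). -/
def rRen : Renaming := Renaming.ofNameFun (fun n => some (2 * n + 1)) (by intro x y z hx hy; simp only [Option.some.injEq] at hx hy; omega)

/-- The partial inverse `l⁻¹` of `l`. -/
def lInv : Renaming :=
  Renaming.ofNameFun (fun n => if n % 2 = 0 then some (n / 2) else none)
    (by intro x y z hx hy; try dsimp only at hx hy
        split at hx <;> split at hy <;> simp_all <;> omega)

/-- The partial inverse `r⁻¹` of `r`. -/
def rInv : Renaming :=
  Renaming.ofNameFun (fun n => if n % 2 = 1 then some (n / 2) else none)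
    (by intro x y z hx hy; try dsimp only at hx hy
        split at hx <;> split at hy <;> simp_all <;> omega)

/-- The left half `ℒ_l` of the label space. -/
def LabL : Set Label := {x | x.name % 2 = 0}

/-- The right half `ℒ_r` of the label space. -/
def LabR : Set Label := {x | x.name % 2 = 1}

/-- Tensor product: disjoint (non-communicating) parallel composition `P[l] | Q[r]`. -/
def tensor (P Q : Proc) : Proc := .par (P.rename lRen) (Q.rename rRen)

/-- Left (forwards) application `⟨Q | P⟩ = ((Q[l] | P) ∖ ℒ_l)[r⁻¹]`. -/
def lapp (Q P : Proc) : Proc := ((Proc.par (Q.rename lRen) P).restrict LabL).rename rInv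

/-- Right (reverse) application `(P | R⟩ = ((P | R[r]) ∖ ℒ_r)[l⁻¹]`. -/
def rapp (P R : Proc) : Proc := ((Proc.par P (R.rename rRen)).restrict LabR).rename lInv

/-! ### The three-fold decomposition `𝒩 = 𝒩₁ ∪̇ 𝒩₂ ∪̇ 𝒩₃` and composition -/

/-- `φ₁₂ : 𝒩 ≅ 𝒩₁ ∪̇ 𝒩₂` (`𝒩ᵢ` = names `≡ i - 1 (mod 3)`), carrying `𝒩_l` onto `𝒩₁`, `𝒩_r` onto `𝒩₂`. -/
def phi12 : Renaming :=
  Renaming.ofNameFun (fun n => some (if n % 2 = 0 then 3 * (n / 2) else 3 * (n / 2) + 1))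
    (by intro x y z hx hy; try dsimp only at hx hy
        simp only [Option.some.injEq] at hx hy
        split at hx <;> split at hy <;> omega)

/-- `φ₂₃ : 𝒩 ≅ 𝒩₂ ∪̇ 𝒩₃`, carrying `𝒩_l` onto `𝒩₂`, `𝒩_r` onto `𝒩₃`. -/
def phi23 : Renaming :=
  Renaming.ofNameFun (fun n => some (if n % 2 = 0 then 3 * (n / 2) + 1 else 3 * (n / 2) + 2))
    (by intro x y z hx hy; try dsimp only at hx hy
        simp only [Option.some.injEq] at hx hy
        split at hx <;> split at hy <;> omega)

/-- The partial inverse `φ₁₃⁻¹` of `φ₁₃ : 𝒩 ≅ 𝒩₁ ∪̇ 𝒩₃`. -/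
def phi13Inv : Renaming :=
  Renaming.ofNameFun
    (fun n => if n % 3 = 0 then some (2 * (n / 3)) else if n % 3 = 2 then some (2 * (n / 3) + 1) else none)
    (by intro x y z hx hy; try dsimp only at hx hy
        split at hx <;> split at hy <;> simp_all <;> omega)

/-- The middle part `𝒩₂` of the label space (as a set of labels). -/
def Lab2 : Set Label := {x | x.name % 3 = 1}

/-- Composition `P ; Q = ((P[φ₁₂] | Q[φ₂₃]) ∖ 𝒩₂)[φ₁₃⁻¹]`. -/
def comp (P Q : Proc) : Proc :=
  ((Proc.par (P.rename phi12) (Q.rename phi23)).restrict Lab2).rename phi13Inv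

/-! ### The identity (wire) process -/

/-- The identity process `I = rec X. Σ_{a ∈ Act₊} (l(a) ∪ r(a)‾).X`. -/
noncomputable def Iproc : Proc :=
  .fix (.sum {n | ∃ a : Act, (Encodable.decode n : Option Act) = some a ∧ a.Nonempty}
    (fun n =>
      match (Encodable.decode n : Option Act) with
      | some a => lRen.onAction a ∪ (rRen.onAction a).image Label.bar
      | none => {Sum.inl 0})
    (fun _ => .var 0)
    (by rintro n ⟨a, ha, hne⟩
        simp only [ha]
        obtain ⟨x, hx⟩ := hne
        refine Finset.Nonempty.mono Finset.subset_union_left ⟨(Sum.map (2 * ·) (2 * ·)) x, ?_⟩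
        simp only [Renaming.onAction, Finset.mem_filterMap]
        exact ⟨x, hx, by cases x <;> rfl⟩))

/-! ## Guarded choice combinators, the additive pairing and injections, `!P`, divergence -/

/-- Binary guarded sum `a.P + b.Q` (guards must be non-`τ`). -/
def gsum2 (a : Act) (P : Proc) (b : Act) (Q : Proc) (ha : a.Nonempty) (hb : b.Nonempty) : Proc :=
  .sum {0, 1} (fun n => if n = 0 then a else b) (fun n => if n = 0 then P else Q)
    (by intro n _; (try dsimp only); split <;> assumption)

/-- Ternary guarded sum `a.P + b.Q + c.R`. -/
def gsum3 (a : Act) (P : Proc) (b : Act) (Q : Proc) (c : Act) (R : Proc)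
    (ha : a.Nonempty) (hb : b.Nonempty) (hc : c.Nonempty) : Proc :=
  .sum {0, 1, 2} (fun n => if n = 0 then a else if n = 1 then b else c)
    (fun n => if n = 0 then P else if n = 1 then Q else R)
    (by intro n _; (try dsimp only); split <;> [skip; split] <;> assumption)

/-- The distinguished names: `α = 0`, `β = 1`, `ω = 2`, `δ = 3`, `γ = 4`, `σ = 5`. -/
def αAct : Act := {Sum.inl 0}
def βAct : Act := {Sum.inl 1}
def αBar : Act := {Sum.inr 0}
def βBar : Act := {Sum.inr 1}
def ωAct : Act := {Sum.inl 2}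
def δBar : Act := {Sum.inr 3}
def γBar : Act := {Sum.inr 4}

/-- The additive pairing `⟨P, Q⟩ = r(α).P + r(β).Q`  (`r(α) = 1`, `r(β) = 3`). -/
def pairR (P Q : Proc) : Proc :=
  gsum2 {Sum.inl 1} P {Sum.inl 3} Q (Finset.singleton_nonempty _) (Finset.singleton_nonempty _)

/-- The plain additive pairing `α.P + β.Q` used in the realizability clauses for `&`. -/
def pairProc (P Q : Proc) : Proc :=
  gsum2 αAct P βAct Q (Finset.singleton_nonempty _) (Finset.singleton_nonempty _)

/-- The left injection `l(P) = l(α)‾.P`  (`l(α) = 0`). -/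
def injl (P : Proc) : Proc := .pre {Sum.inr 0} P

/-- The right injection `r(Q) = r(β)‾.Q`  (`r(β) = 3`). -/
def injr (Q : Proc) : Proc := .pre {Sum.inr 3} Q

/-- The exponential combinator `!P = rec X.(ω.0 + δ.P + γ.(X[l] | X[r]))`. -/
def bangProc (P : Proc) : Proc :=
  .fix (gsum3 ωAct Proc.nil ({Sum.inl 3} : Act) P ({Sum.inl 4} : Act)
    (.par (Proc.rename (.var 0) lRen) (Proc.rename (.var 0) rRen))
    (Finset.singleton_nonempty _) (Finset.singleton_nonempty _) (Finset.singleton_nonempty _))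

/-- `P` diverges if there is an infinite sequence of `τ`-transitions from `P`. -/
def Diverges (P : Proc) : Prop :=
  ∃ f : ℕ → Proc, f 0 = P ∧ ∀ n, Step (f n) ∅ (f (n + 1))

/-- `P ⊥ Q`: closing the system, `P` and `Q` interacting with each other yield no divergence. -/
def Orth (P Q : Proc) : Prop := ¬ Diverges ((Proc.par P Q).restrict Set.univ)

/-! ## Formulas of classical propositional Linear Logic and process realizability -/

/-- Formulas of classical propositional Linear Logic.  Atoms are given arbitrary pairs of
positive/negative realizer sets, required to be closed under failures equivalence
(realizers are processes taken up to `≈_f`). -/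
inductive Formula : Type where
  | atom (pos neg : Set Proc)
      (hpos : ∀ ⦃P Q : Proc⦄, FailEq P Q → P ∈ pos → Q ∈ pos)
      (hneg : ∀ ⦃P Q : Proc⦄, FailEq P Q → P ∈ neg → Q ∈ neg)
  | tensor (A B : Formula)
  | parr (A B : Formula)
  | wth (A B : Formula)
  | oplus (A B : Formula)
  | bang (A : Formula)
  | quest (A : Formula)

/-- Linear negation `A^⊥`, by de Morgan duality. -/
def Formula.neg : Formula → Formula
  | .atom p n hp hn => .atom n p hn hp
  | .tensor A B => .parr A.neg B.neg
  | .parr A B => .tensor A.neg B.neg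
  | .wth A B => .oplus A.neg B.neg
  | .oplus A B => .wth A.neg B.neg
  | .bang A => .quest A.neg
  | .quest A => .bang A.neg

/-- The inductively defined set of counter-realizers of `!A` (least fixed point):
`P ⊩₋ !A` iff `P ≈_f ω.0`, or `P ≈_f δ̄.Q` with `Q ⊩₋ A`, or `P ≈_f γ̄.Q` and for every
`R ⊩₊ A`, `⟨!R | Q⟩ ⊩₋ !A` and `(Q | !R⟩ ⊩₋ !A`. -/
inductive BangNeg (posA negA : Set Proc) : Proc → Prop where
  | weak {P} : FailEq P (.pre ωAct Proc.nil) → BangNeg posA negA P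
  | der {P Q} : FailEq P (.pre δBar Q) → Q ∈ negA → BangNeg posA negA P
  | contr {P Q} : FailEq P (.pre γBar Q) →
      (∀ R ∈ posA, BangNeg posA negA (lapp (bangProc R) Q)) →
      (∀ R ∈ posA, BangNeg posA negA (rapp Q (bangProc R))) →
      BangNeg posA negA P

/-- The realizability semantics of a formula: the pair
(positive realizers `⊩₊`, negative realizers/counter-realizers `⊩₋`). -/
def sem : Formula → Set Proc × Set Proc
  | .atom p n _ _ => (p, n)
  | .tensor A B =>
      ({ P | ∃ P₁ P₂, FailEq P (tensor P₁ P₂) ∧ P₁ ∈ (sem A).1 ∧ P₂ ∈ (sem B).1 },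
       { P | (∀ Q ∈ (sem A).1, lapp Q P ∈ (sem B).2) ∧ (∀ R ∈ (sem B).1, rapp P R ∈ (sem A).2) })
  | .parr A B =>
      ({ P | (∀ Q ∈ (sem A).2, lapp Q P ∈ (sem B).1) ∧ (∀ R ∈ (sem B).2, rapp P R ∈ (sem A).1) },
       { P | ∃ P₁ P₂, FailEq P (tensor P₁ P₂) ∧ P₁ ∈ (sem A).2 ∧ P₂ ∈ (sem B).2 })
  | .wth A B =>
      ({ P | ∃ Q R, FailEq P (pairProc Q R) ∧ Q ∈ (sem A).1 ∧ R ∈ (sem B).1 },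
       { P | (∃ Q, FailEq P (.pre αBar Q) ∧ Q ∈ (sem A).2) ∨
             (∃ R, FailEq P (.pre βBar R) ∧ R ∈ (sem B).2) })
  | .oplus A B =>
      ({ P | (∃ Q, FailEq P (.pre αBar Q) ∧ Q ∈ (sem A).1) ∨
             (∃ R, FailEq P (.pre βBar R) ∧ R ∈ (sem B).1) },
       { P | ∃ Q R, FailEq P (pairProc Q R) ∧ Q ∈ (sem A).2 ∧ R ∈ (sem B).2 })
  | .bang A =>
      ({ P | ∃ Q, FailEq P (bangProc Q) ∧ Q ∈ (sem A).1 },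
       { P | BangNeg (sem A).1 (sem A).2 P })
  | .quest A =>
      ({ P | BangNeg (sem A).2 (sem A).1 P },
       { P | ∃ Q, FailEq P (bangProc Q) ∧ Q ∈ (sem A).2 })

/-- `P ⊩₊ A`: `P` positively realizes `A`. -/
def PosReal (P : Proc) (A : Formula) : Prop := P ∈ (sem A).1

/-- `P ⊩₋ A`: `P` is a counter-realizer of `A`. -/
def NegReal (P : Proc) (A : Formula) : Prop := P ∈ (sem A).2

/-- The interpretation `⅋Γ` of a sequent `Γ = A₁, …, A_k` as a single formula
(associated to the left, so that the last formula occupies the right half of the name space).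
The empty sequent is given the trivial interpretation. -/
def seqPar : List Formula → Formula
  | [] => .atom Set.univ Set.univ (fun _ _ _ h => h) (fun _ _ _ h => h)
  | A :: Γ => Γ.foldl .parr A

/-- `P ⊩₊ Γ` for a sequent `Γ`, treating `Γ` as `⅋Γ`. -/
def SeqReal (P : Proc) (Γ : List Formula) : Prop := PosReal P (seqPar Γ)

/-! ## Auxiliary machinery for the identity axiom -/

lemma ax_bar_bar (x : Label) : x.bar.bar = x := by cases x <;> rfl

lemma ax_name_bar (x : Label) : x.bar.name = x.name := by cases x <;> rfl

/-- doubling on labels -/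
def axDbl : Label → Label := Sum.map (fun n => 2*n) (fun n => 2*n)
/-- double-plus-one on labels -/
def axDblS : Label → Label := Sum.map (fun n => 2*n+1) (fun n => 2*n+1)
/-- bar of double-plus-one -/
def axBdS : Label → Label := fun x => (axDblS x).bar

lemma ax_name_dbl (x : Label) : (axDbl x).name = 2 * x.name := by cases x <;> rfl
lemma ax_name_dblS (x : Label) : (axDblS x).name = 2 * x.name + 1 := by cases x <;> rfl
lemma ax_name_bdS (x : Label) : (axBdS x).name = 2 * x.name + 1 := by cases x <;> rfl

lemma ax_dbl_inj : Function.Injective axDbl := by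
  rintro (a|a) (b|b) h <;>
    simp only [axDbl, Sum.map_inl, Sum.map_inr, Sum.inl.injEq, Sum.inr.injEq,
      reduceCtorEq] at h <;>
    first | exact h.elim | (simp only [Sum.inl.injEq, Sum.inr.injEq]; omega)

lemma ax_dblS_inj : Function.Injective axDblS := by
  rintro (a|a) (b|b) h <;>
    simp only [axDblS, Sum.map_inl, Sum.map_inr, Sum.inl.injEq, Sum.inr.injEq,
      reduceCtorEq] at h <;>
    first | exact h.elim | (simp only [Sum.inl.injEq, Sum.inr.injEq]; omega)

lemma ax_bar_dbl (x : Label) : (axDbl x).bar = axDbl x.bar := by cases x <;> rfl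
lemma ax_bdS_bar (x : Label) : axBdS x.bar = axDblS x := by cases x <;> rfl

lemma ax_lRen_toFun (x : Label) : lRen.toFun x = some (axDbl x) := by cases x <;> rfl
lemma ax_rRen_toFun (x : Label) : rRen.toFun x = some (axDblS x) := by cases x <;> rfl

lemma ax_rInv_dblS (x : Label) : rInv.toFun (axDblS x) = some x := by
  have h1 : ∀ n, (2*n+1) % 2 = 1 := fun n => by omega
  have h2 : ∀ n, (2*n+1) / 2 = n := fun n => by omega
  rcases x with n | n <;> simp [rInv, Renaming.ofNameFun, axDblS, h1, h2]

lemma ax_lInv_dbl (x : Label) : lInv.toFun (axDbl x) = some x := by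
  have h1 : ∀ n, (2*n) % 2 = 0 := fun n => by omega
  have h2 : ∀ n, (2*n) / 2 = n := fun n => by omega
  rcases x with n | n <;> simp [lInv, Renaming.ofNameFun, axDbl, h1, h2]

lemma ax_mem_onAction (f : Renaming) (a : Act) (z : Label) :
    z ∈ f.onAction a ↔ ∃ x ∈ a, f.toFun x = some z := by
  simp [Renaming.onAction, Finset.mem_filterMap]

lemma ax_onAction_total (f : Renaming) (g : Label → Label)
    (hg : ∀ x, f.toFun x = some (g x)) (a : Act) : f.onAction a = a.image g := by
  ext z
  simp only [ax_mem_onAction, Finset.mem_image, hg, Option.some.injEq]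

lemma ax_lRen_onAction (a : Act) : lRen.onAction a = a.image axDbl :=
  ax_onAction_total _ _ ax_lRen_toFun a

lemma ax_rRen_onAction (a : Act) : rRen.onAction a = a.image axDblS :=
  ax_onAction_total _ _ ax_rRen_toFun a

lemma ax_onAction_empty (f : Renaming) : f.onAction ∅ = ∅ := by
  ext z; simp [ax_mem_onAction]

lemma ax_rInv_onAction (a : Act) : rInv.onAction (a.image axDblS) = a := by
  ext z
  simp only [ax_mem_onAction, Finset.mem_image]
  constructor
  · rintro ⟨x, ⟨w, hw, rfl⟩, hx⟩
    rw [ax_rInv_dblS] at hx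
    cases hx; exact hw
  · intro hz
    exact ⟨axDblS z, ⟨z, hz, rfl⟩, ax_rInv_dblS z⟩

lemma ax_lInv_onAction (a : Act) : lInv.onAction (a.image axDbl) = a := by
  ext z
  simp only [ax_mem_onAction, Finset.mem_image]
  constructor
  · rintro ⟨x, ⟨w, hw, rfl⟩, hx⟩
    rw [ax_lInv_dbl] at hx
    cases hx; exact hw
  · intro hz
    exact ⟨axDbl z, ⟨z, hz, rfl⟩, ax_lInv_dbl z⟩

lemma ax_rInv_isSome {x : Label} (h : x.name % 2 = 1) : (rInv.toFun x).isSome := by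
  rcases x with n | n <;> simp only [Label.name, Sum.elim_inl, Sum.elim_inr, id] at h <;>
    simp [rInv, Renaming.ofNameFun, h]

lemma ax_lInv_isSome {x : Label} (h : x.name % 2 = 0) : (lInv.toFun x).isSome := by
  rcases x with n | n <;> simp only [Label.name, Sum.elim_inl, Sum.elim_inr, id] at h <;>
    simp [lInv, Renaming.ofNameFun, h]

lemma ax_mem_LabL {x : Label} : x ∈ LabL ↔ x.name % 2 = 0 := Iff.rfl
lemma ax_mem_LabR {x : Label} : x ∈ LabR ↔ x.name % 2 = 1 := Iff.rfl

/-- the splitting lemma for unions of even-name and odd-name actions -/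
lemma ax_union_split {s t u v : Act}
    (hs : ∀ x ∈ s, x.name % 2 = 0) (ht : ∀ x ∈ t, x.name % 2 = 1)
    (hu : ∀ x ∈ u, x.name % 2 = 0) (hv : ∀ x ∈ v, x.name % 2 = 1)
    (h : s ∪ t = u ∪ v) : s = u ∧ t = v := by
  have key : ∀ x : Label, x ∈ s ∨ x ∈ t ↔ x ∈ u ∨ x ∈ v := fun x => by
    simpa [Finset.mem_union] using Finset.ext_iff.mp h x
  constructor <;> ext x
  · constructor
    · intro hx
      rcases (key x).mp (Or.inl hx) with h' | h'
      · exact h'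
      · exact absurd (hv x h') (by have := hs x hx; omega)
    · intro hx
      rcases (key x).mpr (Or.inl hx) with h' | h'
      · exact h'
      · exact absurd (ht x h') (by have := hu x hx; omega)
  · constructor
    · intro hx
      rcases (key x).mp (Or.inr hx) with h' | h'
      · exact absurd (hu x h') (by have := ht x hx; omega)
      · exact h'
    · intro hx
      rcases (key x).mpr (Or.inr hx) with h' | h'
      · exact absurd (hs x h') (by have := hv x hx; omega)
      · exact h'

lemma ax_disjoint_parity {s t : Act}
    (hs : ∀ x ∈ s, x.name % 2 = 0) (ht : ∀ x ∈ t, x.name % 2 = 1) : Disjoint s t :=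
  Finset.disjoint_left.mpr (fun {x} hx h2 => by have := hs x hx; have := ht x h2; omega)

/-! ### step inversion lemmas -/

lemma ax_step_rename_iff {P : Proc} {f : Renaming} {x : Act} {S : Proc} :
    Step (.rename P f) x S ↔
      ∃ a Q, Step P a Q ∧ (∀ l ∈ a, (f.toFun l).isSome) ∧ x = f.onAction a ∧ S = .rename Q f := by
  constructor
  · intro h
    cases h with
    | rename h hd => exact ⟨_, _, h, hd, rfl, rfl⟩
  · rintro ⟨a, Q, h, hd, rfl, rfl⟩
    exact .rename h hd

lemma ax_step_restrict_iff {P : Proc} {L : Set Label} {x : Act} {S : Proc} :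
    Step (.restrict P L) x S ↔
      ∃ Q, Step P x Q ∧ (∀ l ∈ x, l ∉ L ∧ Label.bar l ∉ L) ∧ S = .restrict Q L := by
  constructor
  · intro h
    cases h with
    | restrict h hd => exact ⟨_, h, hd, rfl⟩
  · rintro ⟨Q, h, hd, rfl⟩
    exact .restrict h hd

lemma ax_step_par_iff {P Q : Proc} {x : Act} {S : Proc} :
    Step (.par P Q) x S ↔
      (∃ P', Step P x P' ∧ S = .par P' Q) ∨ (∃ Q', Step Q x Q' ∧ S = .par P Q') ∨
      (∃ a b c P' Q', Step P (a ∪ b) P' ∧ Step Q (b.image Label.bar ∪ c) Q' ∧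
        Disjoint a b ∧ Disjoint (b.image Label.bar) c ∧ Disjoint a c ∧
        x = a ∪ c ∧ S = .par P' Q') := by
  constructor
  · intro h
    cases h with
    | parL h => exact Or.inl ⟨_, h, rfl⟩
    | parR h => exact Or.inr (Or.inl ⟨_, h, rfl⟩)
    | sync h1 h2 d1 d2 d3 => exact Or.inr (Or.inr ⟨_, _, _, _, _, h1, h2, d1, d2, d3, rfl, rfl⟩)
  · rintro (⟨P', h, rfl⟩ | ⟨Q', h, rfl⟩ | ⟨a, b, c, P', Q', h1, h2, d1, d2, d3, rfl, rfl⟩)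
    · exact .parL h
    · exact .parR h
    · exact .sync h1 h2 d1 d2 d3

lemma ax_step_sum_iff {I : Set ℕ} {act : ℕ → Act} {cont : ℕ → Proc} {hg} {x : Act} {S : Proc} :
    Step (.sum I act cont hg) x S ↔ ∃ j ∈ I, x = act j ∧ S = cont j := by
  constructor
  · intro h
    cases h with
    | sum j hj => exact ⟨j, hj, rfl, rfl⟩
  · rintro ⟨j, hj, rfl, rfl⟩
    exact .sum j hj
/-! ### characterization of the transitions of the wire process -/

/-- the action of the wire on `a`. -/
def axIact (a : Act) : Act := lRen.onAction a ∪ (rRen.onAction a).image Label.bar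

lemma ax_Iact_eq (a : Act) : axIact a = a.image axDbl ∪ a.image axBdS := by
  rw [axIact, ax_lRen_onAction, ax_rRen_onAction, Finset.image_image]
  rfl

lemma ax_Iact_nonempty {a : Act} (h : a.Nonempty) : (axIact a).Nonempty := by
  rw [ax_Iact_eq]
  exact (h.image axDbl).mono Finset.subset_union_left

/-- the index set of the wire's sum -/
def axISet : Set ℕ := {n | ∃ a : Act, (Encodable.decode n : Option Act) = some a ∧ a.Nonempty}

/-- the guards of the wire's sum -/
noncomputable def axIAct : ℕ → Act := fun n =>
  match (Encodable.decode n : Option Act) with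
  | some a => axIact a
  | none => {Sum.inl 0}

lemma axIAct_ne : ∀ n ∈ axISet, (axIAct n).Nonempty := by
  rintro n ⟨a, ha, hne⟩
  simp only [axIAct, ha]
  exact ax_Iact_nonempty hne

/-- the body of the wire's recursion -/
noncomputable def axIbody : Proc := .sum axISet axIAct (fun _ => .var 0) axIAct_ne

/-- the unfolded wire -/
noncomputable def axIsum : Proc := .sum axISet axIAct (fun _ => Iproc) axIAct_ne

lemma ax_Iproc_eq : Iproc = .fix axIbody := rfl

lemma ax_subst_Ibody : Proc.subst (.fix axIbody) 0 axIbody = axIsum := rfl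

lemma ax_step_Iproc_iff {x : Act} {P' : Proc} :
    Step Iproc x P' ↔ ∃ a : Act, a.Nonempty ∧ x = axIact a ∧ P' = Iproc := by
  constructor
  · intro h
    rw [ax_Iproc_eq] at h
    cases h with
    | fix h =>
      rw [ax_subst_Ibody] at h
      rw [axIsum, ax_step_sum_iff] at h
      obtain ⟨j, hj, hx, hP⟩ := h
      obtain ⟨a, hdec, hne⟩ := hj
      refine ⟨a, hne, ?_, hP⟩
      rw [hx, axIAct, hdec]
  · rintro ⟨a, hne, rfl, rfl⟩
    rw [ax_Iproc_eq]
    apply Step.fix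
    rw [ax_subst_Ibody]
    have hmem : Encodable.encode a ∈ axISet := ⟨a, Encodable.encodek a, hne⟩
    have h := Step.sum (I := axISet) (act := axIAct) (cont := fun _ => Iproc)
      (hg := axIAct_ne) (Encodable.encode a) hmem
    have hact : axIAct (Encodable.encode a) = axIact a := by
      rw [axIAct, Encodable.encodek]
    rw [axIsum]
    rw [ax_Iproc_eq] at h
    rwa [hact] at h
/-! ### the wire acts as identity: step correspondence -/

lemma ax_notL_odd {x : Label} (h : x ∉ LabL) : x.name % 2 = 1 := by
  rw [ax_mem_LabL] at h; omega

lemma ax_notR_even {x : Label} (h : x ∉ LabR) : x.name % 2 = 0 := by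
  rw [ax_mem_LabR] at h; omega

lemma ax_mem_image_dbl {a : Act} {x : Label} (h : x ∈ a.image axDbl) : x.name % 2 = 0 := by
  obtain ⟨w, _, rfl⟩ := Finset.mem_image.mp h
  rw [ax_name_dbl]; omega

lemma ax_mem_image_dblS {a : Act} {x : Label} (h : x ∈ a.image axDblS) : x.name % 2 = 1 := by
  obtain ⟨w, _, rfl⟩ := Finset.mem_image.mp h
  rw [ax_name_dblS]; omega

lemma ax_mem_image_bdS {a : Act} {x : Label} (h : x ∈ a.image axBdS) : x.name % 2 = 1 := by
  obtain ⟨w, _, rfl⟩ := Finset.mem_image.mp h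
  rw [ax_name_bdS]; omega

lemma ax_image_bar_dbl (a : Act) : (a.image axDbl).image Label.bar = (a.image Label.bar).image axDbl := by
  rw [Finset.image_image, Finset.image_image]
  exact Finset.image_congr (fun x _ => ax_bar_dbl x)

lemma ax_image_bdS_bar (a : Act) : (a.image Label.bar).image axBdS = a.image axDblS := by
  rw [Finset.image_image]
  exact Finset.image_congr (fun x _ => ax_bdS_bar x)

lemma ax_image_bar_bdS (a : Act) : (a.image axBdS).image Label.bar = a.image axDblS := by
  rw [Finset.image_image]
  exact Finset.image_congr (fun x _ => ax_bar_bar (axDblS x))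

lemma ax_step_lapp_I_iff {X : Proc} {y : Act} {S : Proc} :
    Step (lapp X Iproc) y S ↔ ∃ X', Step X y X' ∧ S = lapp X' Iproc := by
  constructor
  · intro h
    rw [lapp, ax_step_rename_iff] at h
    obtain ⟨m, Q₀, h, hdom, hy, hS⟩ := h
    rw [ax_step_restrict_iff] at h
    obtain ⟨Q₁, h, hres, hQ₀⟩ := h
    have hmodd : ∀ l ∈ m, l.name % 2 = 1 := fun l hl => ax_notL_odd (hres l hl).1
    rw [ax_step_par_iff] at h
    rcases h with ⟨X₁, hX, rfl⟩ | ⟨I₁, hI, rfl⟩ |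
      ⟨a, b, c, X₁, I₁, hX, hI, hab, hbc, hac, hm, rfl⟩
    · -- τ-step of `X` alone
      rw [ax_step_rename_iff] at hX
      obtain ⟨aX, X', hX', _, ham, rfl⟩ := hX
      rw [ax_lRen_onAction] at ham
      have hm0 : m = ∅ := by
        rw [Finset.eq_empty_iff_forall_notMem]
        intro x hx
        have h1 := hmodd x hx
        have h2 := ax_mem_image_dbl (ham ▸ hx)
        omega
      have haX : aX = ∅ := by
        rw [hm0] at ham
        exact Finset.image_eq_empty.mp ham.symm
      refine ⟨X', ?_, ?_⟩
      · rw [hy, hm0, ax_onAction_empty, ← haX]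
        exact hX'
      · rw [hS, hQ₀, lapp]
    · -- the wire cannot move alone
      exfalso
      rw [ax_step_Iproc_iff] at hI
      obtain ⟨a', hne, hact, _⟩ := hI
      obtain ⟨x0, hx0⟩ := hne
      have hx : axDbl x0 ∈ m := by
        rw [hact, ax_Iact_eq]
        exact Finset.mem_union_left _ (Finset.mem_image_of_mem _ hx0)
      have h1 := hmodd _ hx
      have h2 : (axDbl x0).name % 2 = 0 := by rw [ax_name_dbl]; omega
      omega
    · -- synchronization
      rw [ax_step_rename_iff] at hX
      obtain ⟨aX, X', hX', _, hact, rfl⟩ := hX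
      rw [ax_lRen_onAction] at hact
      rw [ax_step_Iproc_iff] at hI
      obtain ⟨a', hne', hact', rfl⟩ := hI
      rw [ax_Iact_eq] at hact'
      have ha : a = ∅ := by
        rw [Finset.eq_empty_iff_forall_notMem]
        intro x hx
        have h1 := hmodd x (hm ▸ Finset.mem_union_left _ hx)
        have h2 := ax_mem_image_dbl (hact ▸ Finset.mem_union_left _ hx)
        omega
      subst ha
      rw [Finset.empty_union] at hact hm
      -- split `b̄ ∪ c = a'[dbl] ∪ a'[bdS]` into even and odd parts
      have hsplit := ax_union_split
        (s := b.image Label.bar) (t := c) (u := a'.image axDbl) (v := a'.image axBdS)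
        (fun x hx => by
          obtain ⟨w, hw, rfl⟩ := Finset.mem_image.mp hx
          have := ax_mem_image_dbl (hact ▸ hw)
          rw [ax_name_bar]; omega)
        (fun x hx => hmodd x (hm ▸ hx))
        (fun x hx => ax_mem_image_dbl hx)
        (fun x hx => ax_mem_image_bdS hx)
        hact'
      obtain ⟨hbb, hc⟩ := hsplit
      rw [hact, ax_image_bar_dbl] at hbb
      have ha' : a' = aX.image Label.bar := (Finset.image_injective ax_dbl_inj hbb).symm
      rw [ha', ax_image_bdS_bar] at hc
      refine ⟨X', ?_, ?_⟩
      · rw [hy, hm, hc, ax_rInv_onAction]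
        exact hX'
      · rw [hS, hQ₀, lapp]
  · rintro ⟨X', hst, rfl⟩
    rcases Finset.eq_empty_or_nonempty y with rfl | hne
    · -- τ-step: propagate through the context via `parL`
      rw [lapp]
      have h1 : Step (X.rename lRen) (lRen.onAction ∅) (X'.rename lRen) :=
        .rename hst (by simp)
      rw [ax_onAction_empty] at h1
      have h2 : Step ((Proc.par (X.rename lRen) Iproc).restrict LabL) ∅
          ((Proc.par (X'.rename lRen) Iproc).restrict LabL) :=
        .restrict (.parL h1) (by simp)
      have h3 := Step.rename (f := rInv) h2 (by simp)
      rwa [ax_onAction_empty] at h3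
    · -- visible step: synchronize with the wire
      rw [lapp]
      have hL : Step (X.rename lRen) (∅ ∪ y.image axDbl) (X'.rename lRen) := by
        rw [Finset.empty_union, ← ax_lRen_onAction]
        exact .rename hst (fun l _ => by rw [ax_lRen_toFun]; rfl)
      have hR : Step Iproc ((y.image axDbl).image Label.bar ∪ y.image axDblS) Iproc := by
        rw [ax_step_Iproc_iff]
        refine ⟨y.image Label.bar, hne.image _, ?_, rfl⟩
        rw [ax_Iact_eq, ax_image_bar_dbl, ax_image_bdS_bar]
      have hsync : Step (Proc.par (X.rename lRen) Iproc) (∅ ∪ y.image axDblS)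
          (Proc.par (X'.rename lRen) Iproc) := by
        refine .sync hL hR (Finset.disjoint_left.mpr (by simp)) ?_
          (Finset.disjoint_left.mpr (by simp))
        exact ax_disjoint_parity
          (fun x hx => by
            obtain ⟨w, hw, rfl⟩ := Finset.mem_image.mp hx
            have := ax_mem_image_dbl hw
            rw [ax_name_bar]; omega)
          (fun x hx => ax_mem_image_dblS hx)
      rw [Finset.empty_union] at hsync
      have hrestr : Step ((Proc.par (X.rename lRen) Iproc).restrict LabL) (y.image axDblS)
          ((Proc.par (X'.rename lRen) Iproc).restrict LabL) := by
        refine .restrict hsync (fun l hl => ?_)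
        have h1 := ax_mem_image_dblS hl
        constructor
        · rw [ax_mem_LabL]; omega
        · rw [ax_mem_LabL, ax_name_bar]; omega
      have hfin := Step.rename (f := rInv) hrestr
        (fun l hl => ax_rInv_isSome (ax_mem_image_dblS hl))
      rwa [ax_rInv_onAction] at hfin
lemma ax_step_rapp_I_iff {R : Proc} {y : Act} {S : Proc} :
    Step (rapp Iproc R) y S ↔ ∃ R', Step R y R' ∧ S = rapp Iproc R' := by
  constructor
  · intro h
    rw [rapp, ax_step_rename_iff] at h
    obtain ⟨m, Q₀, h, hdom, hy, hS⟩ := h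
    rw [ax_step_restrict_iff] at h
    obtain ⟨Q₁, h, hres, hQ₀⟩ := h
    have hmeven : ∀ l ∈ m, l.name % 2 = 0 := fun l hl => ax_notR_even (hres l hl).1
    rw [ax_step_par_iff] at h
    rcases h with ⟨I₁, hI, rfl⟩ | ⟨R₁, hR, rfl⟩ |
      ⟨a, b, c, I₁, R₁, hI, hR, hab, hbc, hac, hm, rfl⟩
    · -- the wire cannot move alone
      exfalso
      rw [ax_step_Iproc_iff] at hI
      obtain ⟨a', hne, hact, _⟩ := hI
      obtain ⟨x0, hx0⟩ := hne
      have hx : axBdS x0 ∈ m := by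
        rw [hact, ax_Iact_eq]
        exact Finset.mem_union_right _ (Finset.mem_image_of_mem _ hx0)
      have h1 := hmeven _ hx
      have h2 : (axBdS x0).name % 2 = 1 := by rw [ax_name_bdS]; omega
      omega
    · -- τ-step of `R` alone
      rw [ax_step_rename_iff] at hR
      obtain ⟨aR, R', hR', _, ham, rfl⟩ := hR
      rw [ax_rRen_onAction] at ham
      have hm0 : m = ∅ := by
        rw [Finset.eq_empty_iff_forall_notMem]
        intro x hx
        have h1 := hmeven x hx
        have h2 := ax_mem_image_dblS (ham ▸ hx)
        omega
      have haR : aR = ∅ := by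
        rw [hm0] at ham
        exact Finset.image_eq_empty.mp ham.symm
      refine ⟨R', ?_, ?_⟩
      · rw [hy, hm0, ax_onAction_empty, ← haR]
        exact hR'
      · rw [hS, hQ₀, rapp]
    · -- synchronization
      rw [ax_step_Iproc_iff] at hI
      obtain ⟨a', hne', hact', rfl⟩ := hI
      rw [ax_Iact_eq] at hact'
      rw [ax_step_rename_iff] at hR
      obtain ⟨aR, R', hR', _, hact, rfl⟩ := hR
      rw [ax_rRen_onAction] at hact
      have hc : c = ∅ := by
        rw [Finset.eq_empty_iff_forall_notMem]
        intro x hx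
        have h1 := hmeven x (hm ▸ Finset.mem_union_right _ hx)
        have h2 := ax_mem_image_dblS (hact ▸ Finset.mem_union_right _ hx)
        omega
      subst hc
      rw [Finset.union_empty] at hact hm
      have hsplit := ax_union_split
        (s := a) (t := b) (u := a'.image axDbl) (v := a'.image axBdS)
        (fun x hx => hmeven x (hm ▸ hx))
        (fun x hx => by
          have hbar : x.bar ∈ aR.image axDblS := hact ▸ Finset.mem_image_of_mem _ hx
          have := ax_mem_image_dblS hbar
          rw [ax_name_bar] at this; omega)
        (fun x hx => ax_mem_image_dbl hx)
        (fun x hx => ax_mem_image_bdS hx)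
        hact'
      obtain ⟨ha, hb⟩ := hsplit
      rw [hb, ax_image_bar_bdS] at hact
      have ha' : a' = aR := Finset.image_injective ax_dblS_inj hact
      refine ⟨R', ?_, ?_⟩
      · rw [hy, hm, ha, ha', ax_lInv_onAction]
        exact hR'
      · rw [hS, hQ₀, rapp]
  · rintro ⟨R', hst, rfl⟩
    rcases Finset.eq_empty_or_nonempty y with rfl | hne
    · rw [rapp]
      have h1 : Step (R.rename rRen) (rRen.onAction ∅) (R'.rename rRen) :=
        .rename hst (by simp)
      rw [ax_onAction_empty] at h1
      have h2 : Step ((Proc.par Iproc (R.rename rRen)).restrict LabR) ∅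
          ((Proc.par Iproc (R'.rename rRen)).restrict LabR) :=
        .restrict (.parR h1) (by simp)
      have h3 := Step.rename (f := lInv) h2 (by simp)
      rwa [ax_onAction_empty] at h3
    · rw [rapp]
      have hL : Step Iproc (y.image axDbl ∪ y.image axBdS) Iproc := by
        rw [ax_step_Iproc_iff]
        exact ⟨y, hne, (ax_Iact_eq y).symm, rfl⟩
      have hR : Step (R.rename rRen) ((y.image axBdS).image Label.bar ∪ ∅)
          (R'.rename rRen) := by
        rw [Finset.union_empty, ax_image_bar_bdS, ← ax_rRen_onAction]
        exact .rename hst (fun l _ => by rw [ax_rRen_toFun]; rfl)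
      have hsync : Step (Proc.par Iproc (R.rename rRen)) (y.image axDbl ∪ ∅)
          (Proc.par Iproc (R'.rename rRen)) := by
        refine .sync hL hR ?_ (Finset.disjoint_left.mpr (by simp))
          (Finset.disjoint_left.mpr (by simp))
        exact ax_disjoint_parity
          (fun x hx => ax_mem_image_dbl hx)
          (fun x hx => ax_mem_image_bdS hx)
      rw [Finset.union_empty] at hsync
      have hrestr : Step ((Proc.par Iproc (R.rename rRen)).restrict LabR) (y.image axDbl)
          ((Proc.par Iproc (R'.rename rRen)).restrict LabR) := by
        refine .restrict hsync (fun l hl => ?_)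
        have h1 := ax_mem_image_dbl hl
        constructor
        · rw [ax_mem_LabR]; omega
        · rw [ax_mem_LabR, ax_name_bar]; omega
      have hfin := Step.rename (f := lInv) hrestr
        (fun l hl => ax_lInv_isSome (ax_mem_image_dbl hl))
      rwa [ax_lInv_onAction] at hfin
/-! ### strong bisimilarity, its congruence properties, and failures equivalence -/

/-- strong bisimulations -/
def IsSB (R : Proc → Proc → Prop) : Prop :=
  ∀ ⦃P Q⦄, R P Q →
    (∀ a P', Step P a P' → ∃ Q', Step Q a Q' ∧ R P' Q') ∧
    (∀ a Q', Step Q a Q' → ∃ P', Step P a P' ∧ R P' Q')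

/-- strong bisimilarity -/
def SB (P Q : Proc) : Prop := ∃ R, IsSB R ∧ R P Q

lemma isSB_SB : IsSB SB := by
  rintro P Q ⟨R, hR, hpq⟩
  constructor
  · intro a P' h
    obtain ⟨Q', h1, h2⟩ := (hR hpq).1 a P' h
    exact ⟨Q', h1, R, hR, h2⟩
  · intro a Q' h
    obtain ⟨P', h1, h2⟩ := (hR hpq).2 a Q' h
    exact ⟨P', h1, R, hR, h2⟩

lemma SB.refl (P : Proc) : SB P P :=
  ⟨Eq, fun _ _ h => h ▸ ⟨fun _ P' hs => ⟨P', hs, rfl⟩, fun _ Q' hs => ⟨Q', hs, rfl⟩⟩, rfl⟩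

lemma SB.symm {P Q : Proc} (h : SB P Q) : SB Q P := by
  obtain ⟨R, hR, hpq⟩ := h
  exact ⟨fun x y => R y x, fun x y hxy => ⟨(hR hxy).2, (hR hxy).1⟩, hpq⟩

lemma SB.fwd {P Q : Proc} (h : SB P Q) {a : Act} {P' : Proc} (hs : Step P a P') :
    ∃ Q', Step Q a Q' ∧ SB P' Q' := (isSB_SB h).1 a P' hs

lemma SB.par_congr {P P' Q Q' : Proc} (hP : SB P P') (hQ : SB Q Q') :
    SB (.par P Q) (.par P' Q') := by
  refine ⟨fun u v => ∃ P P' Q Q', SB P P' ∧ SB Q Q' ∧ u = .par P Q ∧ v = .par P' Q',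
    ?_, P, P', Q, Q', hP, hQ, rfl, rfl⟩
  rintro u v ⟨P, P', Q, Q', hP, hQ, rfl, rfl⟩
  constructor
  · intro a S h
    rw [ax_step_par_iff] at h
    rcases h with ⟨P₁, h, rfl⟩ | ⟨Q₁, h, rfl⟩ | ⟨x, y, z, P₁, Q₁, h1, h2, d1, d2, d3, rfl, rfl⟩
    · obtain ⟨P₁', hs, hsb⟩ := hP.fwd h
      exact ⟨.par P₁' Q', .parL hs, P₁, P₁', Q, Q', hsb, hQ, rfl, rfl⟩
    · obtain ⟨Q₁', hs, hsb⟩ := hQ.fwd h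
      exact ⟨.par P' Q₁', .parR hs, P, P', Q₁, Q₁', hP, hsb, rfl, rfl⟩
    · obtain ⟨P₁', hs1, hsb1⟩ := hP.fwd h1
      obtain ⟨Q₁', hs2, hsb2⟩ := hQ.fwd h2
      exact ⟨.par P₁' Q₁', .sync hs1 hs2 d1 d2 d3, P₁, P₁', Q₁, Q₁', hsb1, hsb2, rfl, rfl⟩
  · intro a S h
    rw [ax_step_par_iff] at h
    rcases h with ⟨P₁, h, rfl⟩ | ⟨Q₁, h, rfl⟩ | ⟨x, y, z, P₁, Q₁, h1, h2, d1, d2, d3, rfl, rfl⟩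
    · obtain ⟨P₁', hs, hsb⟩ := hP.symm.fwd h
      exact ⟨.par P₁' Q, .parL hs, P₁', P₁, Q, Q', hsb.symm, hQ, rfl, rfl⟩
    · obtain ⟨Q₁', hs, hsb⟩ := hQ.symm.fwd h
      exact ⟨.par P Q₁', .parR hs, P, P', Q₁', Q₁, hP, hsb.symm, rfl, rfl⟩
    · obtain ⟨P₁', hs1, hsb1⟩ := hP.symm.fwd h1
      obtain ⟨Q₁', hs2, hsb2⟩ := hQ.symm.fwd h2
      exact ⟨.par P₁' Q₁', .sync hs1 hs2 d1 d2 d3, P₁', P₁, Q₁', Q₁, hsb1.symm, hsb2.symm,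
        rfl, rfl⟩

lemma SB.restrict_congr {P P' : Proc} (L : Set Label) (h : SB P P') :
    SB (.restrict P L) (.restrict P' L) := by
  refine ⟨fun u v => ∃ P P' L, SB P P' ∧ u = .restrict P L ∧ v = .restrict P' L,
    ?_, P, P', L, h, rfl, rfl⟩
  rintro u v ⟨P, P', L, h, rfl, rfl⟩
  constructor
  · intro a S hs
    rw [ax_step_restrict_iff] at hs
    obtain ⟨Q, hs, hd, rfl⟩ := hs
    obtain ⟨Q', hs', hsb⟩ := h.fwd hs
    exact ⟨.restrict Q' L, .restrict hs' hd, Q, Q', L, hsb, rfl, rfl⟩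
  · intro a S hs
    rw [ax_step_restrict_iff] at hs
    obtain ⟨Q, hs, hd, rfl⟩ := hs
    obtain ⟨Q', hs', hsb⟩ := h.symm.fwd hs
    exact ⟨.restrict Q' L, .restrict hs' hd, Q', Q, L, hsb.symm, rfl, rfl⟩

lemma SB.rename_congr {P P' : Proc} (f : Renaming) (h : SB P P') :
    SB (.rename P f) (.rename P' f) := by
  refine ⟨fun u v => ∃ P P' f, SB P P' ∧ u = .rename P f ∧ v = .rename P' f,
    ?_, P, P', f, h, rfl, rfl⟩
  rintro u v ⟨P, P', f, h, rfl, rfl⟩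
  constructor
  · intro a S hs
    rw [ax_step_rename_iff] at hs
    obtain ⟨b, Q, hs, hd, rfl, rfl⟩ := hs
    obtain ⟨Q', hs', hsb⟩ := h.fwd hs
    exact ⟨.rename Q' f, .rename hs' hd, Q, Q', f, hsb, rfl, rfl⟩
  · intro a S hs
    rw [ax_step_rename_iff] at hs
    obtain ⟨b, Q, hs, hd, rfl, rfl⟩ := hs
    obtain ⟨Q', hs', hsb⟩ := h.symm.fwd hs
    exact ⟨.rename Q' f, .rename hs' hd, Q', Q, f, hsb.symm, rfl, rfl⟩

lemma SB.lapp_congr (Q : Proc) {P P' : Proc} (h : SB P P') : SB (lapp Q P) (lapp Q P') :=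
  SB.rename_congr _ (SB.restrict_congr _ (SB.par_congr (SB.refl _) h))

lemma SB.rapp_congr (Q : Proc) {P P' : Proc} (h : SB P P') : SB (rapp P Q) (rapp P' Q) :=
  SB.rename_congr _ (SB.restrict_congr _ (SB.par_congr h (SB.refl _)))

lemma SB.tauStar {P P' : Proc} (h : TauStar P P') :
    ∀ {Q : Proc}, SB P Q → ∃ Q', TauStar Q Q' ∧ SB P' Q' := by
  induction h with
  | refl => exact fun hq => ⟨_, Relation.ReflTransGen.refl, hq⟩
  | tail hab hbc ih =>
    intro Q hq
    obtain ⟨Q', h1, h2⟩ := ih hq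
    obtain ⟨Q'', h3, h4⟩ := h2.fwd hbc
    exact ⟨Q'', h1.tail h3, h4⟩

lemma SB.obs {P Q P' : Proc} {a : Act} (h : SB P Q) (ho : Obs P a P') :
    ∃ Q', Obs Q a Q' ∧ SB P' Q' := by
  obtain ⟨P₁, P₂, t1, st, t2⟩ := ho
  obtain ⟨Q₁, ht1, h1⟩ := SB.tauStar t1 h
  obtain ⟨Q₂, hst, h2⟩ := h1.fwd st
  obtain ⟨Q', ht2, h3⟩ := SB.tauStar t2 h2
  exact ⟨Q', ⟨Q₁, Q₂, ht1, hst, ht2⟩, h3⟩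

lemma SB.obsSeq {P P' : Proc} {s : List Act} (ho : ObsSeq P s P') :
    ∀ {Q : Proc}, SB P Q → ∃ Q', ObsSeq Q s Q' ∧ SB P' Q' := by
  induction ho with
  | nil ht =>
    intro Q hq
    obtain ⟨Q', h1, h2⟩ := SB.tauStar ht hq
    exact ⟨Q', .nil h1, h2⟩
  | cons hobs _ ih =>
    intro Q hq
    obtain ⟨Q₁, h1, h2⟩ := hq.obs hobs
    obtain ⟨Q', h3, h4⟩ := ih h2
    exact ⟨Q', .cons h1 h3, h4⟩

lemma SB.failures_subset {P Q : Proc} (h : SB P Q) : failures P ⊆ failures Q := by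
  rintro ⟨s, Xs⟩ ⟨hs, hX, Pe, hseq, href⟩
  obtain ⟨Qe, hseq', hsb⟩ := SB.obsSeq hseq h
  refine ⟨hs, hX, Qe, hseq', ?_⟩
  rintro a ha ⟨R₂, hobs⟩
  obtain ⟨P₂, hobs', -⟩ := hsb.symm.obs hobs
  exact href a ha ⟨P₂, hobs'⟩

lemma SB.failEq {P Q : Proc} (h : SB P Q) : FailEq P Q :=
  Set.Subset.antisymm h.failures_subset h.symm.failures_subset

lemma sb_lapp_I (X : Proc) : SB (lapp X Iproc) X := by
  refine ⟨fun u v => u = lapp v Iproc, ?_, rfl⟩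
  rintro u v rfl
  constructor
  · intro a S hs
    obtain ⟨X', h1, h2⟩ := ax_step_lapp_I_iff.mp hs
    exact ⟨X', h1, h2⟩
  · intro a X' hs
    exact ⟨lapp X' Iproc, ax_step_lapp_I_iff.mpr ⟨X', hs, rfl⟩, rfl⟩

lemma sb_rapp_I (R : Proc) : SB (rapp Iproc R) R := by
  refine ⟨fun u v => u = rapp Iproc v, ?_, rfl⟩
  rintro u v rfl
  constructor
  · intro a S hs
    obtain ⟨R', h1, h2⟩ := ax_step_rapp_I_iff.mp hs
    exact ⟨R', h1, h2⟩
  · intro a R' hs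
    exact ⟨rapp Iproc R', ax_step_rapp_I_iff.mpr ⟨R', hs, rfl⟩, rfl⟩
/-! ### closure of realizer sets under strong bisimilarity, and duality -/

lemma ax_failEq_trans {P Q R : Proc} (h1 : FailEq P Q) (h2 : FailEq Q R) : FailEq P R :=
  Eq.trans h1 h2

lemma sem_closed (A : Formula) :
    (∀ ⦃P Q⦄, SB P Q → P ∈ (sem A).1 → Q ∈ (sem A).1) ∧
    (∀ ⦃P Q⦄, SB P Q → P ∈ (sem A).2 → Q ∈ (sem A).2) := by
  induction A with
  | atom pos neg hp hn =>
    exact ⟨fun P Q h hm => hp h.failEq hm, fun P Q h hm => hn h.failEq hm⟩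
  | tensor A B ihA ihB =>
    constructor
    · rintro P Q h ⟨P₁, P₂, hf, h1, h2⟩
      exact ⟨P₁, P₂, ax_failEq_trans h.symm.failEq hf, h1, h2⟩
    · rintro P Q h ⟨h1, h2⟩
      exact ⟨fun X hX => ihB.2 (SB.lapp_congr X h) (h1 X hX),
             fun X hX => ihA.2 (SB.rapp_congr X h) (h2 X hX)⟩
  | parr A B ihA ihB =>
    constructor
    · rintro P Q h ⟨h1, h2⟩
      exact ⟨fun X hX => ihB.1 (SB.lapp_congr X h) (h1 X hX),
             fun X hX => ihA.1 (SB.rapp_congr X h) (h2 X hX)⟩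
    · rintro P Q h ⟨P₁, P₂, hf, h1, h2⟩
      exact ⟨P₁, P₂, ax_failEq_trans h.symm.failEq hf, h1, h2⟩
  | wth A B ihA ihB =>
    constructor
    · rintro P Q h ⟨X, Y, hf, h1, h2⟩
      exact ⟨X, Y, ax_failEq_trans h.symm.failEq hf, h1, h2⟩
    · rintro P Q h (⟨X, hf, h1⟩ | ⟨X, hf, h1⟩)
      · exact Or.inl ⟨X, ax_failEq_trans h.symm.failEq hf, h1⟩
      · exact Or.inr ⟨X, ax_failEq_trans h.symm.failEq hf, h1⟩
  | oplus A B ihA ihB =>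
    constructor
    · rintro P Q h (⟨X, hf, h1⟩ | ⟨X, hf, h1⟩)
      · exact Or.inl ⟨X, ax_failEq_trans h.symm.failEq hf, h1⟩
      · exact Or.inr ⟨X, ax_failEq_trans h.symm.failEq hf, h1⟩
    · rintro P Q h ⟨X, Y, hf, h1, h2⟩
      exact ⟨X, Y, ax_failEq_trans h.symm.failEq hf, h1, h2⟩
  | bang A ihA =>
    constructor
    · rintro P Q h ⟨X, hf, h1⟩
      exact ⟨X, ax_failEq_trans h.symm.failEq hf, h1⟩
    · rintro P Q h hb
      cases hb with
      | weak hf => exact .weak (ax_failEq_trans h.symm.failEq hf)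
      | der hf hm => exact .der (ax_failEq_trans h.symm.failEq hf) hm
      | contr hf h1 h2 => exact .contr (ax_failEq_trans h.symm.failEq hf) h1 h2
  | quest A ihA =>
    constructor
    · rintro P Q h hb
      cases hb with
      | weak hf => exact .weak (ax_failEq_trans h.symm.failEq hf)
      | der hf hm => exact .der (ax_failEq_trans h.symm.failEq hf) hm
      | contr hf h1 h2 => exact .contr (ax_failEq_trans h.symm.failEq hf) h1 h2
    · rintro P Q h ⟨X, hf, h1⟩
      exact ⟨X, ax_failEq_trans h.symm.failEq hf, h1⟩

lemma sem_neg (A : Formula) : sem A.neg = ((sem A).2, (sem A).1) := by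
  induction A with
  | atom pos neg hp hn => rfl
  | tensor A B ihA ihB => simp [Formula.neg, sem, ihA, ihB]
  | parr A B ihA ihB => simp [Formula.neg, sem, ihA, ihB]
  | wth A B ihA ihB => simp [Formula.neg, sem, ihA, ihB]
  | oplus A B ihA ihB => simp [Formula.neg, sem, ihA, ihB]
  | bang A ihA => simp [Formula.neg, sem, ihA]
  | quest A ihA => simp [Formula.neg, sem, ihA]

/-- **Soundness of the Identity axiom**: for every formula `A`, the wire process
`I = rec X. Σ_{a ∈ Act₊} (l(a) ∪ r(a)‾).X` satisfies `I ⊩₊ A^⊥ ⅋ A`, i.e. `I` realizes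
`A ⊸ A`: it carries realizers of `A` to realizers of `A` under left application, and
counter-realizers of `A` to counter-realizers of `A` under right application. -/
theorem identity_axiom_sound (A : Formula) :
    PosReal Iproc (Formula.parr A.neg A) ∧
    (∀ Q : Proc, PosReal Q A → PosReal (lapp Q Iproc) A) ∧
    (∀ R : Proc, NegReal R A → NegReal (rapp Iproc R) A) := by
  have key1 : ∀ Q : Proc, Q ∈ (sem A).1 → lapp Q Iproc ∈ (sem A).1 :=
    fun Q hQ => (sem_closed A).1 (sb_lapp_I Q).symm hQ
  have key2 : ∀ R : Proc, R ∈ (sem A).2 → rapp Iproc R ∈ (sem A).2 :=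
    fun R hR => (sem_closed A).2 (sb_rapp_I R).symm hR
  refine ⟨?_, key1, key2⟩
  show Iproc ∈ (sem (.parr A.neg A)).1
  refine ⟨fun Q hQ => ?_, fun R hR => ?_⟩
  · have hQ' : Q ∈ (sem A).1 := by rw [sem_neg A] at hQ; exact hQ
    exact key1 Q hQ'
  · have hgoal : rapp Iproc R ∈ (sem A).2 := key2 R hR
    rw [sem_neg A]
    exact hgoal
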